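/- Let d, d_j, n, b, k_1, k_2, K, r > 0 and let τ* ≥ 0. Suppose n·b·e^{-d_j·τ*}·K/(1+k_1·K) > d. Then the system r(1 - x*/K) = b·y*/(1+k_1·x*+k_2·y*) and n·b·x*·e^{-d_j·τ*}/(1+k_1·x*+k_2·y*) = d has a solution with 0 < x* < K and y* > 0. -/

import Mathlib

theorem stmt_0 (d dj n b k1 k2 K r τs : ℝ)
    (hd : 0 < d) (hdj : 0 < dj) (hn : 0 < n) (hb : 0 < b)
    (hk1 : 0 < k1) (hk2 : 0 < k2) (hK : 0 < K) (hr : 0 < r)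
    (hτ : 0 ≤ τs)
    (hperm : n * b * Real.exp (-dj * τs) * K / (1 + k1 * K) > d) :
    ∃ x y : ℝ, 0 < x ∧ x < K ∧ 0 < y ∧
      r * (1 - x / K) = b * y / (1 + k1 * x + k2 * y) ∧
      n * b * x * Real.exp (-dj * τs) / (1 + k1 * x + k2 * y) = d := by
  set E : ℝ := n * b * Real.exp (-dj * τs) with hEdef
  have hE : 0 < E := by positivity
  have hden : 0 < 1 + k1 * K := by positivity
  have hperm' : d * (1 + k1 * K) < E * K := by
    rw [gt_iff_lt, lt_div_iff₀ hden] at hperm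
    linarith
  set A : ℝ := E - d * k1 with hAdef
  have hAK : d < A * K := by nlinarith
  have hA : 0 < A := by
    rcases le_or_gt A 0 with h | h
    · nlinarith
    · exact h
  set x0 : ℝ := d / A with hx0def
  have hx0 : 0 < x0 := div_pos hd hA
  have hx0K : x0 < K := (div_lt_iff₀ hA).mpr (by nlinarith)
  set f : ℝ → ℝ := fun x => r * (1 - x / K) - b * (A * x - d) / (E * k2 * x)
    with hfdef
  have hcont : ContinuousOn f (Set.Icc x0 K) := by
    apply ContinuousOn.sub
    · fun_prop
    · apply ContinuousOn.div
      · fun_prop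
      · fun_prop
      · intro x hx
        have : 0 < x := lt_of_lt_of_le hx0 hx.1
        positivity
  have hfx0 : 0 < f x0 := by
    have hAx0 : A * x0 = d := by
      rw [hx0def]; field_simp
    simp only [hfdef, hAx0, sub_self, zero_div, mul_zero]
    have : x0 / K < 1 := (div_lt_one hK).mpr hx0K
    nlinarith
  have hfK : f K < 0 := by
    have h1 : 0 < b * (A * K - d) / (E * k2 * K) := by
      apply div_pos
      · nlinarith
      · positivity
    simp only [hfdef]
    have : K / K = 1 := div_self hK.ne'
    rw [this]
    linarith
  have hsub := intermediate_value_Ioo' (le_of_lt hx0K) hcont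
  have h0mem : (0 : ℝ) ∈ Set.Ioo (f K) (f x0) := ⟨hfK, hfx0⟩
  obtain ⟨x, hxmem, hfx⟩ := hsub h0mem
  have hxpos : 0 < x := lt_trans hx0 hxmem.1
  have hxK : x < K := hxmem.2
  have hAx : d < A * x := by
    have := hxmem.1
    rw [hx0def, div_lt_iff₀ hA] at this
    linarith
  set y : ℝ := (A * x - d) / (d * k2) with hydef
  have hy : 0 < y := div_pos (by linarith) (by positivity)
  refine ⟨x, y, hxpos, hxK, hy, ?_, ?_⟩
  · -- first equation
    have hk2y : k2 * y = (A * x - d) / d := by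
      rw [hydef]; field_simp
    have hdenx : 1 + k1 * x + k2 * y = E * x / d := by
      rw [hk2y]; field_simp [hAdef]; ring
    rw [hdenx]
    have hfx' : r * (1 - x / K) = b * (A * x - d) / (E * k2 * x) := by
      have := hfx
      simp only [hfdef] at this
      linarith
    rw [hfx', hydef]
    rw [div_div_eq_mul_div, div_eq_div_iff (by positivity) (by positivity)]
    field_simp
  · -- second equation
    have hk2y : k2 * y = (A * x - d) / d := by
      rw [hydef]; field_simp
    have hdenx : 1 + k1 * x + k2 * y = E * x / d := by
      rw [hk2y]; field_simp [hAdef]; ring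
    rw [show n * b * x * Real.exp (-dj * τs) = E * x by rw [hEdef]; ring, hdenx]
    field_simp
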